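/- Let k be a field of characteristic p > 0, δ ∈ k nonzero, and λ, μ partitions with λ p-regular, |λ| - |μ| = t ≥ 0. If the cell module Δ_μ of the partition algebra P_n^k(δ) has the simple module L_λ as a composition factor, then tδ - t|μ| - ct(λ) + ct(μ) - t(t-1)/2 = 0 in k, where ct(ν) denotes the sum of contents of all boxes of ν. -/

import Mathlib

def IsPartWithin (n : ℕ) (f : ℕ → ℕ) : Prop :=
  (∀ i j, i ≤ j → f j ≤ f i) ∧ ∀ i, n ≤ i → f i = 0

def psize (n : ℕ) (f : ℕ → ℕ) : ℕ := ∑ i ∈ Finset.range n, f i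

/-- `ct(f)`: the sum of the contents `y - x` of all nodes `(x,y)` of the Young
diagram of `f` (0-indexed node `(i,j)` has content `j - i`). -/
def ctsum (n : ℕ) (f : ℕ → ℕ) : ℤ :=
  ∑ i ∈ Finset.range n, ∑ j ∈ Finset.range (f i), ((j : ℤ) - (i : ℤ))

/-- `f` is `p`-regular: no nonzero part is repeated `p` or more times. -/
def PRegular (p : ℕ) (f : ℕ → ℕ) : Prop :=
  ¬ ∃ i, 0 < f (i + (p - 1)) ∧ f i = f (i + (p - 1))

/-- Theorem 6.4 of the paper.  `A` plays the role of the partition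
algebra `P_n^k(δ)` over a field `k` of characteristic `p`, with `δ ≠ 0`; `Δlam`, `Δmu`
are the cell modules `Δ_λ`, `Δ_μ`, and `Lmod` is the simple head `L_λ` of `Δ_λ`.  The
central element `Z = Z_n` acts on a cell module `Δ_ν` (with `|ν| = n - t`) by the
scalar `tδ + C(|ν|,2) + ct(ν)` (Lemma 6.3).  The hypothesis `[Δ_μ : L_λ] ≠ 0` is
rendered as: `L_λ` is (isomorphic to) a subquotient `N/M` of `Δ_μ`.  The conclusion is
the identity `tδ - t|μ| - ct(λ) + ct(μ) - t(t-1)/2 = 0` in `k`. -/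
theorem partition_algebra_necessary_condition
    {k : Type*} [Field k] (p : ℕ) [Fact p.Prime] [CharP k p]
    {A : Type*} [Ring A] [Algebra k A]
    (n : ℕ) (δ : k) (hδ : δ ≠ 0)
    (lam mu : ℕ → ℕ) (hlam : IsPartWithin n lam) (hmu : IsPartWithin n mu)
    (hlsz : psize n lam ≤ n) (hmsz : psize n mu ≤ n)
    (hreg : PRegular p lam)
    (t : ℕ) (ht : psize n lam = psize n mu + t)
    (Z : A) (hZcentral : ∀ a : A, Z * a = a * Z)
    (Δlam Δmu Lmod : Type*)
    [AddCommGroup Δlam] [Module A Δlam] [Nontrivial Δlam]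
    [AddCommGroup Δmu] [Module A Δmu]
    [AddCommGroup Lmod] [Module A Lmod] [Nontrivial Lmod]
    (hLsimple : IsSimpleModule A Lmod)
    (hZlam : ∀ v : Δlam, Z • v =
      (algebraMap k A (((n - psize n lam : ℕ) : k) * δ
        + ((Nat.choose (psize n lam) 2 : ℕ) : k) + ((ctsum n lam : ℤ) : k))) • v)
    (hZmu : ∀ v : Δmu, Z • v =
      (algebraMap k A (((n - psize n mu : ℕ) : k) * δ
        + ((Nat.choose (psize n mu) 2 : ℕ) : k) + ((ctsum n mu : ℤ) : k))) • v)
    (π : Δlam →ₗ[A] Lmod) (hπ : Function.Surjective π)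
    (N M : Submodule A Δmu) (hMN : M ≤ N)
    (e : (N ⧸ (Submodule.comap N.subtype M)) ≃ₗ[A] Lmod) :
    (t : k) * δ - (t : k) * ((psize n mu : ℕ) : k)
      - ((ctsum n lam : ℤ) : k) + ((ctsum n mu : ℤ) : k)
      - ((t * (t - 1) / 2 : ℕ) : k) = 0 := by

  set l := psize n lam with hl
  set m := psize n mu with hm
  set cl : k := ((n - l : ℕ) : k) * δ + ((Nat.choose l 2 : ℕ) : k) + ((ctsum n lam : ℤ) : k)
    with hcl_def
  set cm : k := ((n - m : ℕ) : k) * δ + ((Nat.choose m 2 : ℕ) : k) + ((ctsum n mu : ℤ) : k)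
    with hcm_def
  -- Z acts on Lmod by cl (via the surjection π)
  have hactl : ∀ w : Lmod, Z • w = (algebraMap k A cl) • w := by
    intro w
    obtain ⟨v, rfl⟩ := hπ w
    rw [← map_smul, hZlam, map_smul]
  -- Z acts on Lmod by cm (via the subquotient of Δmu)
  have hactN : ∀ y : N, Z • y = (algebraMap k A cm) • y := by
    intro y
    apply Subtype.ext
    simpa using hZmu (y : Δmu)
  have hactQ : ∀ x : (N ⧸ (Submodule.comap N.subtype M)), Z • x = (algebraMap k A cm) • x := by
    intro x
    obtain ⟨y, rfl⟩ := Submodule.Quotient.mk_surjective _ x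
    rw [← Submodule.Quotient.mk_smul, hactN, Submodule.Quotient.mk_smul]
  have hactm : ∀ w : Lmod, Z • w = (algebraMap k A cm) • w := by
    intro w
    have : w = e (e.symm w) := (e.apply_symm_apply w).symm
    rw [this, ← map_smul, hactQ, map_smul]
  -- hence cl = cm
  have hkey : cl = cm := by
    by_contra h
    obtain ⟨w, hw⟩ := exists_ne (0 : Lmod)
    have h0 : (algebraMap k A (cl - cm)) • w = 0 := by
      rw [map_sub, sub_smul, ← hactl, ← hactm, sub_self]
    have h1 : (algebraMap k A (cl - cm)⁻¹) • ((algebraMap k A (cl - cm)) • w)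
        = (algebraMap k A (cl - cm)⁻¹) • (0 : Lmod) := by rw [h0]
    rw [smul_smul, ← map_mul, inv_mul_cancel₀ (sub_ne_zero.mpr h), map_one, one_smul,
      smul_zero] at h1
    exact hw h1
  -- arithmetic
  have hln : l ≤ n := hlsz
  have hchoose : ∀ a b : ℕ, Nat.choose (a + b) 2 = Nat.choose a 2 + a * b + Nat.choose b 2 := by
    intro a b
    induction b with
    | zero => simp
    | succ b ih =>
        have e1 : Nat.choose (a + (b + 1)) 2 = (a + b) + Nat.choose (a + b) 2 := by
          show Nat.choose ((a + b) + 1) (1 + 1) = _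
          rw [Nat.choose_succ_succ, Nat.choose_one_right]
        have e2 : Nat.choose (b + 1) 2 = b + Nat.choose b 2 := by
          show Nat.choose (b + 1) (1 + 1) = _
          rw [Nat.choose_succ_succ, Nat.choose_one_right]
        have e3 : a * (b + 1) = a * b + a := by ring
        omega
  have h1 : ((n - m : ℕ) : k) = ((n - l : ℕ) : k) + (t : k) := by
    have : (n - m : ℕ) = (n - l) + t := by omega
    rw [this]; push_cast; ring
  have h2 : ((Nat.choose l 2 : ℕ) : k)
      = ((Nat.choose m 2 : ℕ) : k) + (m : k) * (t : k) + ((Nat.choose t 2 : ℕ) : k) := by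
    have : Nat.choose l 2 = Nat.choose m 2 + m * t + Nat.choose t 2 := by
      rw [ht]; exact hchoose m t
    rw [this]; push_cast; ring
  have h3 : ((t * (t - 1) / 2 : ℕ) : k) = ((Nat.choose t 2 : ℕ) : k) := by
    rw [Nat.choose_two_right]
  rw [h3]
  have hEq : ((n - l : ℕ) : k) * δ + ((Nat.choose l 2 : ℕ) : k) + ((ctsum n lam : ℤ) : k)
      = ((n - m : ℕ) : k) * δ + ((Nat.choose m 2 : ℕ) : k) + ((ctsum n mu : ℤ) : k) := hkey
  linear_combination (-1 : k) * hEq - δ * h1 + h2
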